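/- Let F be a differential field of characteristic zero with field of constants C, and let F(x) be the rational function field over F with the derivation extended by x' = g for some g ∈ F. Then the field of constants of F(x) equals C if and only if there is no f ∈ F with f' = g. -/

import Mathlib

open Polynomial

/-- Extension of a derivation `DF` on `F` to `F[X]` with `X' = g`. -/
noncomputable def Dpoly {F : Type*} [Field F] (DF : F → F) (g : F) (p : F[X]) : F[X] :=
  p.sum (fun n a => monomial n (DF a)) + C g * derivative p

lemma Dpoly_coeff {F : Type*} [Field F] (DF : F → F) (hDF0 : DF 0 = 0) (g : F)
    (p : F[X]) (k : ℕ) :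
    (Dpoly DF g p).coeff k = DF (p.coeff k) + g * (derivative p).coeff k := by
  unfold Dpoly
  rw [coeff_add, coeff_C_mul]
  congr 1
  rw [coeff_sum]
  simp only [coeff_monomial]
  rw [Polynomial.sum_def, Finset.sum_ite_eq' p.support k (fun m => DF (p.coeff m))]
  by_cases hk : k ∈ p.support
  · simp [hk]
  · rw [if_neg hk, Polynomial.notMem_support_iff.mp hk, hDF0]

lemma Dpoly_add {F : Type*} [Field F] (DF : F → F) (hDF0 : DF 0 = 0)
    (hFadd : ∀ a b : F, DF (a + b) = DF a + DF b) (g : F) (p q : F[X]) :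
    Dpoly DF g (p + q) = Dpoly DF g p + Dpoly DF g q := by
  ext k
  simp only [Dpoly_coeff DF hDF0, coeff_add, derivative_add, hFadd]
  ring

lemma Dpoly_monomial {F : Type*} [Field F] (DF : F → F) (hDF0 : DF 0 = 0) (g : F)
    (n : ℕ) (a : F) :
    Dpoly DF g (monomial n a) = monomial n (DF a) + C g * monomial (n - 1) (a * n) := by
  unfold Dpoly
  rw [Polynomial.sum_monomial_index a _ (by rw [hDF0, monomial_zero_right]),
    derivative_monomial]

lemma Dpoly_degree_lt {F : Type*} [Field F] (DF : F → F) (hDF0 : DF 0 = 0) (hDF1 : DF 1 = 0)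
    (g : F) (q : F[X]) (hq : q.Monic) :
    (Dpoly DF g q).degree < q.degree := by
  rw [Polynomial.degree_eq_natDegree hq.ne_zero]
  rw [Polynomial.degree_lt_iff_coeff_zero]
  intro m hm
  rw [Dpoly_coeff DF hDF0, coeff_derivative]
  have h1 : q.coeff (m + 1) = 0 :=
    coeff_eq_zero_of_natDegree_lt (lt_of_le_of_lt hm (Nat.lt_succ_self m))
  rw [h1]
  rcases eq_or_lt_of_le hm with h | h
  · rw [← h, hq.coeff_natDegree, hDF1]; ring
  · rw [coeff_eq_zero_of_natDegree_lt h, hDF0]; ring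

lemma DF_zero {F : Type*} [Field F] (DF : F → F)
    (hFadd : ∀ a b : F, DF (a + b) = DF a + DF b) : DF 0 = 0 := by
  have h := hFadd 0 0
  rw [add_zero] at h
  exact (left_eq_add.mp h)

lemma DF_one {F : Type*} [Field F] (DF : F → F)
    (hFmul : ∀ a b : F, DF (a * b) = a * DF b + DF a * b) : DF 1 = 0 := by
  have h := hFmul 1 1
  rw [mul_one, one_mul, mul_one] at h
  exact (left_eq_add.mp h)

lemma DF_nat {F : Type*} [Field F] (DF : F → F)
    (hFadd : ∀ a b : F, DF (a + b) = DF a + DF b)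
    (hFmul : ∀ a b : F, DF (a * b) = a * DF b + DF a * b) (n : ℕ) : DF (n : F) = 0 := by
  induction n with
  | zero => simpa using DF_zero DF hFadd
  | succ k ih => push_cast; rw [hFadd, ih, DF_one DF hFmul, add_zero]

lemma DF_neg {F : Type*} [Field F] (DF : F → F)
    (hFadd : ∀ a b : F, DF (a + b) = DF a + DF b) (x : F) : DF (-x) = -DF x := by
  have h := hFadd x (-x)
  rw [add_neg_cancel, DF_zero DF hFadd] at h
  exact eq_neg_of_add_eq_zero_right h.symm

lemma DF_div {F : Type*} [Field F] (DF : F → F)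
    (hFmul : ∀ a b : F, DF (a * b) = a * DF b + DF a * b)
    (b d : F) (hd : DF d = 0) (hdne : d ≠ 0) : DF (b / d) = DF b / d := by
  have h := hFmul (b / d) d
  rw [div_mul_cancel₀ b hdne, hd, mul_zero, zero_add] at h
  field_simp [h]
  rw [h]; ring

lemma no_antideriv_aux {F : Type*} [Field F] [CharZero F] (DF : F → F)
    (hFadd : ∀ a b : F, DF (a + b) = DF a + DF b)
    (hFmul : ∀ a b : F, DF (a * b) = a * DF b + DF a * b)
    (g : F) (hc : ∀ f : F, DF f ≠ g)
    (p : F[X]) (hp : Dpoly DF g p = 0) : p.natDegree = 0 := by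
  have hDF0 := DF_zero DF hFadd
  by_contra hm0
  set m := p.natDegree with hm
  have hmpos : 1 ≤ m := Nat.one_le_iff_ne_zero.mpr hm0
  have hpne : p ≠ 0 := fun h => hm0 (by rw [hm, h, natDegree_zero])
  have ha : p.coeff m ≠ 0 := by
    rw [hm, ← leadingCoeff]; exact leadingCoeff_ne_zero.mpr hpne
  -- leading coefficient has zero derivative
  have hA : DF (p.coeff m) = 0 := by
    have h := congrArg (fun q => Polynomial.coeff q m) hp
    simp only [coeff_zero] at h
    rw [Dpoly_coeff DF hDF0, coeff_derivative,
      coeff_eq_zero_of_natDegree_lt (Nat.lt_succ_self m)] at h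
    simpa using h
  -- subleading coefficient relation
  have hB : DF (p.coeff (m - 1)) + g * (p.coeff m * m) = 0 := by
    have h := congrArg (fun q => Polynomial.coeff q (m - 1)) hp
    simp only [coeff_zero] at h
    rw [Dpoly_coeff DF hDF0, coeff_derivative, Nat.sub_add_cancel hmpos] at h
    push_cast [Nat.cast_sub hmpos] at h ⊢
    convert h using 3
    ring
  set a := p.coeff m
  set b := p.coeff (m - 1)
  set d := a * (m : F) with hd
  have hDFd : DF d = 0 := by
    rw [hd, hFmul, DF_nat DF hFadd hFmul, hA, mul_zero, zero_mul, add_zero]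
  have hdne : d ≠ 0 := mul_ne_zero ha (Nat.cast_ne_zero.mpr hm0)
  apply hc (-(b / d))
  rw [DF_neg DF hFadd, DF_div DF hFmul b d hDFd hdne]
  have hb : DF b = -(g * d) := eq_neg_of_add_eq_zero_left hB
  rw [hb]
  field_simp

/-- For a differential field `F` with derivation `DF`, extend the
derivation to the rational function field `F(x) = RatFunc F` by `x' = g`.
Then the constants of `F(x)` are exactly the (images of the) constants of `F`
iff `g` is not a derivative in `F`. -/
theorem stmt_0 (F : Type*) [Field F] [CharZero F]
    (DF : F → F)
    (hFadd : ∀ a b : F, DF (a + b) = DF a + DF b)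
    (hFmul : ∀ a b : F, DF (a * b) = a * DF b + DF a * b)
    (g : F)
    (DE : RatFunc F → RatFunc F)
    (hEadd : ∀ a b : RatFunc F, DE (a + b) = DE a + DE b)
    (hEmul : ∀ a b : RatFunc F, DE (a * b) = a * DE b + DE a * b)
    (hcompat : ∀ a : F, DE (algebraMap F (RatFunc F) a) = algebraMap F (RatFunc F) (DF a))
    (hX : DE RatFunc.X = algebraMap F (RatFunc F) g) :
    {h : RatFunc F | DE h = 0} = (algebraMap F (RatFunc F)) '' {c : F | DF c = 0}
      ↔ ¬ ∃ f : F, DF f = g := by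
  have hDF0 := DF_zero DF hFadd
  have hDF1 := DF_one DF hFmul
  have hDE1 := DF_one DE hEmul
  have hDEneg := DF_neg DE hEadd
  constructor
  · -- set equality → no antiderivative
    rintro hset ⟨f, hf⟩
    have hmem : RatFunc.X - algebraMap F (RatFunc F) f ∈ {h : RatFunc F | DE h = 0} := by
      show DE _ = 0
      rw [sub_eq_add_neg, hEadd, hX, hDEneg, hcompat, hf]
      ring
    rw [hset] at hmem
    obtain ⟨c, _, hc⟩ := hmem
    have hXeq : algebraMap F[X] (RatFunc F) (Polynomial.C (c + f))
        = algebraMap F[X] (RatFunc F) Polynomial.X := by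
      rw [Polynomial.C_add, map_add, RatFunc.algebraMap_X, RatFunc.algebraMap_C,
        RatFunc.algebraMap_C, ← RatFunc.algebraMap_eq_C, hc]
      ring
    exact Polynomial.X_ne_C (c + f) (RatFunc.algebraMap_injective F hXeq).symm
  · intro hcnot
    have hc' : ∀ f : F, DF f ≠ g := fun f hf => hcnot ⟨f, hf⟩
    -- derivative of powers of X
    have hXpow : ∀ n : ℕ, DE (RatFunc.X ^ n)
        = (n : RatFunc F) * RatFunc.X ^ (n - 1) * algebraMap F (RatFunc F) g := by
      intro n
      induction n with
      | zero => simpa using hDE1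
      | succ k ih =>
        rw [pow_succ, hEmul, hX, ih]
        cases k with
        | zero => simp
        | succ j =>
          simp only [Nat.add_sub_cancel]
          push_cast
          ring
    -- derivative of polynomials
    have key : ∀ p : F[X], DE (algebraMap F[X] (RatFunc F) p)
        = algebraMap F[X] (RatFunc F) (Dpoly DF g p) := by
      intro p
      induction p using Polynomial.induction_on' with
      | add p q hp hq =>
        rw [map_add, hEadd, hp, hq, Dpoly_add DF hDF0 hFadd, map_add]
      | monomial n a =>
        rw [Dpoly_monomial DF hDF0, ← Polynomial.C_mul_X_pow_eq_monomial,
          ← Polynomial.C_mul_X_pow_eq_monomial (n := n) (a := DF a),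
          ← Polynomial.C_mul_X_pow_eq_monomial (n := n - 1)]
        simp only [map_add, map_mul, map_pow, RatFunc.algebraMap_X, RatFunc.algebraMap_C,
          ← RatFunc.algebraMap_eq_C]
        rw [hEmul, hcompat, hXpow, map_natCast]
        ring
    refine Set.Subset.antisymm ?_ ?_
    · -- constants of F(x) are constants of F
      intro h hh
      simp only [Set.mem_setOf_eq] at hh
      have hdenne : algebraMap F[X] (RatFunc F) h.denom ≠ 0 :=
        RatFunc.algebraMap_ne_zero (RatFunc.denom_ne_zero h)
      have heq : h * algebraMap F[X] (RatFunc F) h.denom = algebraMap F[X] (RatFunc F) h.num := by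
        have := div_mul_cancel₀ (algebraMap F[X] (RatFunc F) h.num) hdenne
        rwa [RatFunc.num_div_denom] at this
      have heq2 := congrArg DE heq
      rw [hEmul, hh, zero_mul, add_zero, key, key] at heq2
      have heq3 : algebraMap F[X] (RatFunc F) (h.num * Dpoly DF g h.denom)
          = algebraMap F[X] (RatFunc F) (Dpoly DF g h.num * h.denom) := by
        rw [map_mul, map_mul, ← heq, ← heq2]
        ring
      have heq4 : h.num * Dpoly DF g h.denom = Dpoly DF g h.num * h.denom :=
        RatFunc.algebraMap_injective F heq3
      have hdvd : h.denom ∣ Dpoly DF g h.denom :=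
        (RatFunc.isCoprime_num_denom h).symm.dvd_of_dvd_mul_left
          ⟨Dpoly DF g h.num, by rw [heq4]; ring⟩
      have hDpd0 : Dpoly DF g h.denom = 0 :=
        Polynomial.eq_zero_of_dvd_of_degree_lt hdvd
          (Dpoly_degree_lt DF hDF0 hDF1 g h.denom (RatFunc.monic_denom h))
      have hden1 : h.denom = 1 :=
        (Polynomial.Monic.natDegree_eq_zero (RatFunc.monic_denom h)).mp
          (no_antideriv_aux DF hFadd hFmul g hc' _ hDpd0)
      rw [hDpd0, hden1, mul_zero, mul_one] at heq4
      have hnum0 : h.num.natDegree = 0 :=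
        no_antideriv_aux DF hFadd hFmul g hc' _ heq4.symm
      have hDFc : DF (h.num.coeff 0) = 0 := by
        have h0 := congrArg (fun q => Polynomial.coeff q 0) heq4.symm
        simp only [Polynomial.coeff_zero] at h0
        rw [Dpoly_coeff DF hDF0, Polynomial.coeff_derivative,
          Polynomial.coeff_eq_zero_of_natDegree_lt (by omega : h.num.natDegree < 0 + 1)] at h0
        simpa using h0
      have hnumC : h.num = Polynomial.C (h.num.coeff 0) :=
        Polynomial.eq_C_of_natDegree_eq_zero hnum0
      have hfin : h = algebraMap F (RatFunc F) (h.num.coeff 0) := by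
        rw [hden1, map_one, mul_one] at heq
        refine heq.trans ?_
        conv_lhs => rw [hnumC]
        rw [RatFunc.algebraMap_C, RatFunc.algebraMap_eq_C]
      exact ⟨h.num.coeff 0, hDFc, hfin.symm⟩
    · rintro x ⟨c, hc, rfl⟩
      simp only [Set.mem_setOf_eq] at hc ⊢
      rw [hcompat, hc, map_zero]
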